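/- arXiv:1810.09486 — 4 statements merged into one kernel-verified Lean document; each statement's English description precedes it below -/
import Mathlib

section
/- Let G be a group acting by homeomorphisms on a compact metrizable space M with the convergence property: for every sequence (gₙ) of distinct elements of G there exist a subsequence and points a, b ∈ M such that the subsequence converges to the constant map b locally uniformly on M \ {a}. Let A⁻, A⁺ be disjoint closed subsets of M, and let B₁, C₁, B₂, C₂ ⊆ M be sets such that for each i there exist open sets Vᵢ ⊇ Bᵢ and Uᵢ ⊇ Cᵢ with closure(Vᵢ) ∩ closure(Uᵢ) = ∅. Then the set {g ∈ G : gA⁻ ∩ B₁ ≠ ∅, gA⁻ ∩ C₁ ≠ ∅, gA⁺ ∩ B₂ ≠ ∅, gA⁺ ∩ C₂ ≠ ∅} is finite. -/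
open Filter Set Pointwise

/-- A group action on a topological space has the convergence property if every sequence of
distinct elements has a subsequence converging locally uniformly on the complement of a
(repelling) point `a` to a constant (attracting) point `b`. -/
def ConvergenceAction (G M : Type*) [Group G] [TopologicalSpace M] [MulAction G M] : Prop :=
  ∀ g : ℕ → G, Function.Injective g →
    ∃ φ : ℕ → ℕ, StrictMono φ ∧ ∃ a b : M,
      ∀ K : Set M, IsCompact K → K ⊆ {a}ᶜ →
        ∀ U ∈ nhds b, ∀ᶠ n in atTop, (g (φ n)) • K ⊆ U

private lemma convergence_key {G M : Type*} [Group G] [TopologicalSpace M] [CompactSpace M]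
    [MulAction G M]
    (g : ℕ → G) (a b : M)
    (hab : ∀ K : Set M, IsCompact K → K ⊆ {a}ᶜ →
        ∀ U ∈ nhds b, ∀ᶠ n in atTop, (g n) • K ⊆ U)
    (A : Set M) (hA : IsClosed A) (ha : a ∉ A)
    (B C V U : Set M) (hBV : B ⊆ V) (hCU : C ⊆ U)
    (hVU : closure V ∩ closure U = ∅)
    (hmem : ∀ n, ((g n) • A ∩ B).Nonempty ∧ ((g n) • A ∩ C).Nonempty) : False := by
  have hsub : A ⊆ {a}ᶜ := fun x hx hxa =>
    ha (by rwa [mem_singleton_iff.mp hxa] at hx)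
  have hb : b ∉ closure V ∨ b ∉ closure U := by
    by_contra h
    push_neg at h
    exact absurd (hVU ▸ mem_inter h.1 h.2) (notMem_empty b)
  rcases hb with hb | hb
  · obtain ⟨n, hn⟩ := (hab A hA.isCompact hsub (closure V)ᶜ
      (isClosed_closure.isOpen_compl.mem_nhds hb)).exists
    obtain ⟨x, hx1, hx2⟩ := (hmem n).1
    exact hn hx1 (subset_closure (hBV hx2))
  · obtain ⟨n, hn⟩ := (hab A hA.isCompact hsub (closure U)ᶜ
      (isClosed_closure.isOpen_compl.mem_nhds hb)).exists
    obtain ⟨x, hx1, hx2⟩ := (hmem n).2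
    exact hn hx1 (subset_closure (hCU hx2))

theorem finiteness_of_annulus_translates
    {G M : Type*} [Group G] [TopologicalSpace M] [CompactSpace M]
    [TopologicalSpace.MetrizableSpace M] [MulAction G M]
    (hcont : ∀ g : G, Continuous fun m : M => g • m)
    (hconv : ConvergenceAction G M)
    (Am Ap : Set M) (hAm : IsClosed Am) (hAp : IsClosed Ap) (hdisj : Disjoint Am Ap)
    (B₁ C₁ B₂ C₂ : Set M)
    (hsep : ∀ i : Fin 2,
      ∃ V U : Set M, IsOpen V ∧ IsOpen U ∧
        (if i = 0 then B₁ else B₂) ⊆ V ∧ (if i = 0 then C₁ else C₂) ⊆ U ∧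
        closure V ∩ closure U = ∅) :
    {g : G | (g • Am ∩ B₁).Nonempty ∧ (g • Am ∩ C₁).Nonempty ∧
             (g • Ap ∩ B₂).Nonempty ∧ (g • Ap ∩ C₂).Nonempty}.Finite := by
  by_contra hfin
  have hinf : {g : G | (g • Am ∩ B₁).Nonempty ∧ (g • Am ∩ C₁).Nonempty ∧
             (g • Ap ∩ B₂).Nonempty ∧ (g • Ap ∩ C₂).Nonempty}.Infinite := hfin
  let f := hinf.natEmbedding
  have hginj : Function.Injective (fun n => (f n : G)) := fun m n h =>
    f.injective (Subtype.ext h)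
  obtain ⟨φ, hφ, a, b, hab⟩ := hconv _ hginj
  have hmemS : ∀ n, ((f (φ n) : G) • Am ∩ B₁).Nonempty ∧
      ((f (φ n) : G) • Am ∩ C₁).Nonempty ∧
      ((f (φ n) : G) • Ap ∩ B₂).Nonempty ∧ ((f (φ n) : G) • Ap ∩ C₂).Nonempty :=
    fun n => (f (φ n)).2
  by_cases ha : a ∈ Am
  · have ha' : a ∉ Ap := Set.disjoint_left.mp hdisj ha
    obtain ⟨V, U, hV, hU, hBV, hCU, hVU⟩ := hsep 1
    rw [if_neg (by decide)] at hBV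
    rw [if_neg (by decide)] at hCU
    exact convergence_key (fun n => (f (φ n) : G)) a b hab Ap hAp ha' B₂ C₂ V U hBV hCU hVU
      (fun n => ⟨(hmemS n).2.2.1, (hmemS n).2.2.2⟩)
  · obtain ⟨V, U, hV, hU, hBV, hCU, hVU⟩ := hsep 0
    rw [if_pos rfl] at hBV
    rw [if_pos rfl] at hCU
    exact convergence_key (fun n => (f (φ n) : G)) a b hab Am hAm ha B₁ C₁ V U hBV hCU hVU
      (fun n => ⟨(hmemS n).1, (hmemS n).2.1⟩)
end

section
/- Let (Q, ρ) be a hyperbolic path quasimetric space and let G act on Q by isometries with a loxodromic element g (i.e., n ↦ gⁿx is a quasi-isometric embedding of ℤ). Then there exist N ∈ ℕ and M > 0 such that for every n ∈ ℕ, inf_{x ∈ Q} ρ(x, g^{nN} x) ≥ nM. -/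
open Set

/-- A finite sequence is an `s`-geodesic segment if
`|i−j| − s ≤ ρ(xᵢ,xⱼ) ≤ |i−j| + s` for all indices. -/
def IsGeodSeg {Q : Type*} (ρ : Q → Q → ℝ) (s : ℝ) {n : ℕ} (x : Fin (n + 1) → Q) : Prop :=
  ∀ i j : Fin (n + 1),
    |(i : ℝ) - (j : ℝ)| - s ≤ ρ (x i) (x j) ∧ ρ (x i) (x j) ≤ |(i : ℝ) - (j : ℝ)| + s

/-- An `s`-geodesic segment from `a` to `b`. -/
def IsGeodSegBetween {Q : Type*} (ρ : Q → Q → ℝ) (s : ℝ) {n : ℕ}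
    (x : Fin (n + 1) → Q) (a b : Q) : Prop :=
  IsGeodSeg ρ s x ∧ x 0 = a ∧ x (Fin.last n) = b

theorem loxodromic_uniform_displacement {Q : Type*} (ρ : Q → Q → ℝ) (r s δ : ℝ)
    (hr : 0 ≤ r) (hs : 0 ≤ s) (hδ : 0 ≤ δ)
    -- `ρ` is an `r`-quasimetric
    (hnonneg : ∀ x y, 0 ≤ ρ x y)
    (hzero : ∀ x, ρ x x = 0)
    (hsymm : ∀ x y, ρ x y = ρ y x)
    (htri : ∀ x y z, ρ x y ≤ ρ x z + ρ z y + r)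
    -- `(Q,ρ)` is a path quasimetric space: any two points are joined by an `s`-geodesic
    (hpath : ∀ a b : Q, ∃ n : ℕ, ∃ x : Fin (n + 1) → Q, IsGeodSegBetween ρ s x a b)
    -- hyperbolicity: triangles of `s`-geodesic segments are `δ`-slim
    (hslim : ∀ a b c : Q, ∀ n₁ n₂ n₃ : ℕ,
      ∀ x₁ : Fin (n₁ + 1) → Q, ∀ x₂ : Fin (n₂ + 1) → Q, ∀ x₃ : Fin (n₃ + 1) → Q,
      IsGeodSegBetween ρ s x₁ a b → IsGeodSegBetween ρ s x₂ b c →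
      IsGeodSegBetween ρ s x₃ c a →
      ∀ i : Fin (n₁ + 1), ∃ q ∈ range x₂ ∪ range x₃, ρ (x₁ i) q ≤ δ)
    -- a group `G` acting by isometries
    {G : Type*} [Group G] [MulAction G Q]
    (hiso : ∀ (g : G) (x y : Q), ρ (g • x) (g • y) = ρ x y)
    -- a loxodromic element `g`
    (g : G) (L C : ℝ) (hL : 0 < L) (x₀ : Q)
    (hlox : ∀ m n : ℤ, (1 / L) * |(m : ℝ) - (n : ℝ)| - C ≤ ρ ((g ^ m) • x₀) ((g ^ n) • x₀) ∧
      ρ ((g ^ m) • x₀) ((g ^ n) • x₀) ≤ L * |(m : ℝ) - (n : ℝ)| + C) :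
    ∃ N : ℕ, 0 < N ∧ ∃ Mc : ℝ, 0 < Mc ∧
      ∀ n : ℕ, ∀ x : Q, (n : ℝ) * Mc ≤ ρ x ((g ^ (n * N)) • x) := by

  refine ⟨⌈L * (r + 1)⌉₊ + 1, Nat.succ_pos _, 1, one_pos, ?_⟩
  have hNL : L * (r + 1) ≤ ((⌈L * (r + 1)⌉₊ + 1 : ℕ) : ℝ) := by
    push_cast
    have := Nat.le_ceil (L * (r + 1))
    linarith
  set N : ℕ := ⌈L * (r + 1)⌉₊ + 1 with hNdef
  intro n x
  rcases Nat.eq_zero_or_pos n with hn0 | hn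
  · subst hn0
    simpa [hzero] using le_refl (0:ℝ)
  set m : ℕ := n * N with hm
  -- subadditivity of displacement
  have claim1 : ∀ k : ℕ, ρ x ((g ^ (k * m)) • x) ≤ k * (ρ x ((g ^ m) • x) + r) := by
    intro k
    induction k with
    | zero => simp [hzero]
    | succ k ih =>
      have hsplit : (g ^ ((k + 1) * m)) • x = (g ^ (k * m)) • ((g ^ m) • x) := by
        rw [← mul_smul, ← pow_add, add_mul, one_mul]
      calc ρ x ((g ^ ((k + 1) * m)) • x)
          ≤ ρ x ((g ^ (k * m)) • x) + ρ ((g ^ (k * m)) • x) ((g ^ ((k + 1) * m)) • x) + r :=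
            htri _ _ _
        _ = ρ x ((g ^ (k * m)) • x) + ρ x ((g ^ m) • x) + r := by
            rw [hsplit, hiso]
        _ ≤ k * (ρ x ((g ^ m) • x) + r) + (ρ x ((g ^ m) • x) + r) := by linarith
        _ = (k + 1 : ℕ) * (ρ x ((g ^ m) • x) + r) := by push_cast; ring
  -- comparison with the orbit of x₀
  have claim2 : ∀ k : ℕ,
      (1 / L) * (k * m : ℝ) - C ≤ 2 * ρ x₀ x + 2 * r + ρ x ((g ^ (k * m)) • x) := by
    intro k
    have hlow := (hlox 0 ((k * m : ℕ) : ℤ)).1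
    have hz : (g ^ (0 : ℤ)) • x₀ = x₀ := by simp
    have hzp : (g ^ (((k * m : ℕ)) : ℤ)) = g ^ (k * m) := zpow_natCast g (k * m)
    rw [hz, hzp] at hlow
    have habs : |(((0:ℤ)):ℝ) - (((k * m : ℕ) : ℤ) : ℝ)| = (k * m : ℝ) := by
      push_cast
      rw [zero_sub, abs_neg, abs_of_nonneg]
      positivity
    rw [habs] at hlow
    have h1 : ρ x₀ ((g ^ (k * m)) • x₀) ≤ ρ x₀ x + ρ x ((g ^ (k * m)) • x₀) + r := htri _ _ _
    have h2 : ρ x ((g ^ (k * m)) • x₀) ≤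
        ρ x ((g ^ (k * m)) • x) + ρ ((g ^ (k * m)) • x) ((g ^ (k * m)) • x₀) + r := htri _ _ _
    have h3 : ρ ((g ^ (k * m)) • x) ((g ^ (k * m)) • x₀) = ρ x₀ x := by
      rw [hiso, hsymm]
    rw [h3] at h2
    linarith
  -- deduce the lower bound on displacement of g^m
  have key : (m : ℝ) / L ≤ ρ x ((g ^ m) • x) + r := by
    by_contra hcon
    push_neg at hcon
    set ε : ℝ := (m : ℝ) / L - (ρ x ((g ^ m) • x) + r) with hε
    have hεpos : 0 < ε := by simp only [hε]; linarith
    obtain ⟨k, hk⟩ := exists_nat_gt ((C + 2 * ρ x₀ x + 2 * r) / ε)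
    have hk2 : C + 2 * ρ x₀ x + 2 * r < k * ε := by
      rw [div_lt_iff₀ hεpos] at hk
      linarith
    have c1 := claim1 k
    have c2 := claim2 k
    have hmL : (1 / L) * ((k : ℝ) * m) = (k : ℝ) * ((m : ℝ) / L) := by
      field_simp
    have : (k : ℝ) * ε ≤ C + 2 * ρ x₀ x + 2 * r := by
      have : (1 / L) * ((k : ℝ) * (m : ℝ)) - C ≤
          2 * ρ x₀ x + 2 * r + (k : ℝ) * (ρ x ((g ^ m) • x) + r) := by
        have := claim2 k
        push_cast at this ⊢
        linarith [claim1 k]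
      rw [hmL] at this
      simp only [hε]
      nlinarith
    linarith
  -- conclude
  have hN' : (n : ℝ) * (r + 1) ≤ (m : ℝ) / L := by
    have hm' : ((m : ℕ) : ℝ) = (n : ℝ) * (N : ℝ) := by rw [hm]; push_cast; ring
    rw [hm', mul_div_assoc]
    have hNL' : r + 1 ≤ (N : ℝ) / L := by
      rw [le_div_iff₀ hL]
      linarith [hNL]
    have hn0 : (0:ℝ) ≤ (n : ℝ) := Nat.cast_nonneg n
    exact mul_le_mul_of_nonneg_left hNL' hn0
  have hn1 : (1 : ℝ) ≤ (n : ℝ) := by exact_mod_cast hn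
  have : (n : ℝ) * (r + 1) - r ≤ ρ x ((g ^ m) • x) := by linarith
  have hfin : (n : ℝ) ≤ ρ x ((g ^ m) • x) := by nlinarith
  simpa [hm] using hfin
end

section
/- Let G be a countable group acting by homeomorphisms on a metric space M, μ a probability distribution on G whose support generates G, and ν a μ-stationary probability measure on M. Suppose Y ⊆ M has the property: there is a sequence of positive numbers (εₙ) such that for every translate fY (f ∈ G) there is a sequence (gₙ) of group elements (possibly depending on f) such that the translates fY, g₁⁻¹fY, g₂⁻¹fY, … are pairwise disjoint, and for each gₙ there is m ∈ ℕ with μ^{*m}(gₙ) > εₙ. Then ν(Y) = 0. -/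
open MeasureTheory Set Pointwise

/-- Convolution powers of a probability distribution `μ` on a group `G`:
`muConvPow μ 1 = μ` and `muConvPow μ (m+1) g = Σ_h μ(h) · muConvPow μ m (h⁻¹g)`. -/
noncomputable def muConvPow {G : Type*} [Group G] [DecidableEq G] (μ : G → ENNReal) : ℕ → G → ENNReal
  | 0, g => if g = 1 then 1 else 0
  | m + 1, g => ∑' h : G, μ h * muConvPow μ m (h⁻¹ * g)

theorem zero_measure_criterion
    {G M : Type*} [Group G] [Countable G] [DecidableEq G]
    [MetricSpace M] [MeasurableSpace M] [BorelSpace M] [MulAction G M]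
    (hcont : ∀ g : G, Continuous fun m : M => g • m)
    (μ : G → ENNReal) (hμ : ∑' g : G, μ g = 1)
    (hgen : Subgroup.closure {g : G | μ g ≠ 0} = ⊤)
    (ν : Measure M) [IsProbabilityMeasure ν]
    (hstat : ∀ A : Set M, MeasurableSet A → ν A = ∑' g : G, μ g * ν ((fun m => g • m) ⁻¹' A))
    (Y : Set M) (hY : MeasurableSet Y)
    (ε : ℕ → ENNReal) (hε : ∀ n, 0 < ε n)
    (hprop : ∀ f : G, ∃ g : ℕ → G,
      (∀ n, Disjoint (f • Y) ((g n)⁻¹ • f • Y)) ∧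
      (Pairwise fun i j => Disjoint ((g i)⁻¹ • f • Y) ((g j)⁻¹ • f • Y)) ∧
      (∀ n, ∃ m : ℕ, ε n < muConvPow μ m (g n))) :
    ν Y = 0 := by
  -- measurability facts
  have hmeasPre : ∀ (a : G) (A : Set M), MeasurableSet A →
      MeasurableSet ((fun m : M => a • m) ⁻¹' A) :=
    fun a A hA => (hcont a).measurable hA
  have hmeasSmul : ∀ (a : G) (A : Set M), MeasurableSet A → MeasurableSet (a • A) := by
    intro a A hA
    have h1 : (fun m : M => a⁻¹ • m) ⁻¹' A = (a⁻¹)⁻¹ • A := Set.preimage_smul a⁻¹ A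
    rw [inv_inv] at h1
    rw [← h1]
    exact hmeasPre a⁻¹ A hA
  -- total mass of convolution powers
  have htot : ∀ m : ℕ, ∑' g : G, muConvPow μ m g = 1 := by
    intro m
    induction m with
    | zero =>
        have : ∀ g : G, g ≠ 1 → muConvPow μ 0 g = 0 := by
          intro g hg; simp [muConvPow, hg]
        rw [tsum_eq_single 1 this]
        simp [muConvPow]
    | succ m ih =>
        have hdef : ∀ g : G, muConvPow μ (m + 1) g = ∑' h : G, μ h * muConvPow μ m (h⁻¹ * g) :=
          fun g => rfl
        calc ∑' g : G, muConvPow μ (m + 1) g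
            = ∑' g : G, ∑' h : G, μ h * muConvPow μ m (h⁻¹ * g) := by
              simp only [hdef]
          _ = ∑' h : G, ∑' g : G, μ h * muConvPow μ m (h⁻¹ * g) := ENNReal.tsum_comm
          _ = ∑' h : G, μ h * ∑' g : G, muConvPow μ m (h⁻¹ * g) := by
              simp only [ENNReal.tsum_mul_left]
          _ = ∑' h : G, μ h * 1 := by
              congr 1
              funext h
              congr 1
              have := (Equiv.mulLeft h).tsum_eq (fun g => muConvPow μ m (h⁻¹ * g))
              simp only [Equiv.coe_mulLeft, inv_mul_cancel_left] at this
              rw [← this, ih]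
          _ = 1 := by simpa using hμ
  -- iterated stationarity
  have hstatIter : ∀ (m : ℕ) (A : Set M), MeasurableSet A →
      ν A = ∑' g : G, muConvPow μ m g * ν ((fun x : M => g • x) ⁻¹' A) := by
    intro m
    induction m with
    | zero =>
        intro A hA
        have h0 : ∀ g : G, g ≠ 1 →
            muConvPow μ 0 g * ν ((fun x : M => g • x) ⁻¹' A) = 0 := by
          intro g hg; simp [muConvPow, hg]
        rw [tsum_eq_single 1 h0]
        simp [muConvPow]
    | succ m ih =>
        intro A hA
        have hdef : ∀ g : G, muConvPow μ (m + 1) g = ∑' h : G, μ h * muConvPow μ m (h⁻¹ * g) :=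
          fun g => rfl
        have hcomp : ∀ h k : G,
            (fun x : M => k • x) ⁻¹' ((fun x : M => h • x) ⁻¹' A)
              = (fun x : M => (h * k) • x) ⁻¹' A := by
          intro h k
          ext x
          simp [Set.mem_preimage, mul_smul]
        calc ν A = ∑' h : G, μ h * ν ((fun x : M => h • x) ⁻¹' A) := hstat A hA
          _ = ∑' h : G, μ h * ∑' k : G,
                muConvPow μ m k * ν ((fun x : M => (h * k) • x) ⁻¹' A) := by
              congr 1
              funext h
              congr 1
              rw [ih _ (hmeasPre h A hA)]
              congr 1
              funext k
              rw [hcomp h k]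
          _ = ∑' h : G, ∑' k : G,
                μ h * (muConvPow μ m k * ν ((fun x : M => (h * k) • x) ⁻¹' A)) := by
              simp only [ENNReal.tsum_mul_left]
          _ = ∑' h : G, ∑' g : G,
                μ h * (muConvPow μ m (h⁻¹ * g) * ν ((fun x : M => g • x) ⁻¹' A)) := by
              congr 1
              funext h
              have := (Equiv.mulLeft h).tsum_eq
                (fun g => μ h * (muConvPow μ m (h⁻¹ * g) * ν ((fun x : M => g • x) ⁻¹' A)))
              simp only [Equiv.coe_mulLeft, inv_mul_cancel_left] at this
              rw [← this]
          _ = ∑' g : G, ∑' h : G,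
                μ h * (muConvPow μ m (h⁻¹ * g) * ν ((fun x : M => g • x) ⁻¹' A)) :=
              ENNReal.tsum_comm
          _ = ∑' g : G, muConvPow μ (m + 1) g * ν ((fun x : M => g • x) ⁻¹' A) := by
              congr 1
              funext g
              simp only [← mul_assoc, ENNReal.tsum_mul_right]
              rw [hdef g]
  -- the supremum of measures of translates
  set c : ENNReal := ⨆ f : G, ν (f • Y) with hc_def
  have hcle1 : c ≤ 1 := iSup_le fun f => prob_le_one
  have hcT : c ≠ ⊤ := (lt_of_le_of_lt hcle1 ENNReal.one_lt_top).ne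
  have hYle : ν Y ≤ c := by
    have h1 : ν ((1 : G) • Y) ≤ c := le_iSup (fun f : G => ν (f • Y)) 1
    rwa [one_smul] at h1
  by_contra hne
  have hc0 : c ≠ 0 := by
    intro h
    exact hne (le_antisymm (h ▸ hYle) (zero_le))
  have hhalf0 : c / 2 ≠ 0 := by
    simp [ENNReal.div_eq_zero_iff, hc0]
  have hhalfT : c / 2 ≠ ⊤ :=
    ne_top_of_le_ne_top hcT ENNReal.half_le_self
  -- choose N with 1 < N * (c/2)
  obtain ⟨N, hN⟩ : ∃ N : ℕ, 1 / (c / 2) < (N : ENNReal) := ENNReal.exists_nat_gt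
    (by simp [ENNReal.div_eq_top, hhalf0])
  have hN1 : 1 < (N : ENNReal) * (c / 2) :=
    (ENNReal.div_lt_iff (Or.inl hhalf0) (Or.inl hhalfT)).mp hN
  -- choose δ
  set εinf : ENNReal := (Finset.range N).inf ε with hεinf_def
  have hεinf0 : 0 < εinf :=
    (Finset.lt_inf_iff (by norm_num)).mpr fun n _ => hε n
  set δ : ENNReal := (c / 2) * εinf with hδ_def
  have hδ0 : δ ≠ 0 := by
    simp only [hδ_def, ne_eq, mul_eq_zero, not_or]
    exact ⟨hhalf0, hεinf0.ne'⟩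
  -- choose f nearly attaining the sup
  obtain ⟨f, hf⟩ : ∃ f : G, c - δ < ν (f • Y) := by
    have : c - δ < c := ENNReal.sub_lt_self hcT hc0 hδ0
    exact lt_iSup_iff.mp (hc_def ▸ this)
  have hfδ : c ≤ ν (f • Y) + δ := tsub_le_iff_right.mp hf.le
  obtain ⟨g, -, hdisjp, hεg⟩ := hprop f
  -- translate sets
  set A : ℕ → Set M := fun n => (g n)⁻¹ • f • Y with hA_def
  have hAmeas : ∀ n, MeasurableSet (A n) :=
    fun n => hmeasSmul _ _ (hmeasSmul f Y hY)
  -- key claim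
  have hclaim : ∀ n < N, c / 2 < ν (A n) := by
    intro n hn
    by_contra hle
    push_neg at hle
    obtain ⟨m, hm⟩ := hεg n
    set P : G → ENNReal := muConvPow μ m with hP_def
    have hstatm : ν (f • Y) = ∑' g' : G, P g' * ν (g'⁻¹ • f • Y) := by
      rw [hstatIter m (f • Y) (hmeasSmul f Y hY)]
      congr 1
      funext g'
      rw [Set.preimage_smul g' (f • Y)]
    have hsplitF : ∀ F : G → ENNReal,
        ∑' g' : G, F g' = F (g n) + ∑' g' : G, if g' = g n then 0 else F g' := by
      intro F
      rw [ENNReal.tsum_eq_add_tsum_ite (g n)]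
      congr 1
      exact tsum_congr fun x => by by_cases h : x = g n <;> simp [h]
    have hsplit := hsplitF (fun g' : G => P g' * ν (g'⁻¹ • f • Y))
    have htotsplit := hsplitF P
    rw [htot m] at htotsplit
    set Q : ENNReal := ∑' g' : G, if g' = g n then 0 else P g' with hQ_def
    have hPQ : P (g n) + Q = 1 := htotsplit.symm
    have hQbound : (∑' g' : G, if g' = g n then 0 else P g' * ν (g'⁻¹ • f • Y)) ≤ Q * c := by
      rw [hQ_def, ← ENNReal.tsum_mul_right]
      refine ENNReal.tsum_le_tsum fun g' => ?_
      by_cases h : g' = g n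
      · simp [h]
      · simp only [h, if_false]
        refine mul_le_mul_right ?_ _
        have : ν ((g'⁻¹ * f) • Y) ≤ c := le_iSup (fun f : G => ν (f • Y)) (g'⁻¹ * f)
        rwa [mul_smul] at this
    have hbound : ν (f • Y) ≤ P (g n) * (c / 2) + Q * c := by
      rw [hstatm, hsplit]
      exact add_le_add (mul_le_mul_right hle _) hQbound
    have hPn1 : P (g n) ≤ 1 := le_trans (ENNReal.le_tsum (g n)) (htot m).le
    have hQ1 : Q ≤ 1 := le_trans le_add_self hPQ.le
    have hδlt : δ < P (g n) * (c / 2) := by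
      have h1 : εinf ≤ ε n := Finset.inf_le (Finset.mem_range.mpr hn)
      have h2 : δ ≤ (c / 2) * ε n := mul_le_mul_right h1 _
      have h3 : (c / 2) * ε n < (c / 2) * P (g n) :=
        (ENNReal.mul_lt_mul_iff_right hhalf0 hhalfT).mpr hm
      calc δ ≤ (c / 2) * ε n := h2
        _ < (c / 2) * P (g n) := h3
        _ = P (g n) * (c / 2) := mul_comm _ _
    have hfinite : P (g n) * (c / 2) + Q * c ≠ ⊤ := by
      refine ENNReal.add_ne_top.mpr ⟨?_, ?_⟩
      · exact ENNReal.mul_ne_top (lt_of_le_of_lt hPn1 ENNReal.one_lt_top).ne hhalfT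
      · exact ENNReal.mul_ne_top (lt_of_le_of_lt hQ1 ENNReal.one_lt_top).ne hcT
    have hcontra : c < c := by
      calc c ≤ ν (f • Y) + δ := hfδ
        _ ≤ (P (g n) * (c / 2) + Q * c) + δ := add_le_add_left hbound _
        _ < (P (g n) * (c / 2) + Q * c) + P (g n) * (c / 2) :=
            ENNReal.add_lt_add_left hfinite hδlt
        _ = P (g n) * (c / 2 + c / 2) + Q * c := by ring
        _ = P (g n) * c + Q * c := by rw [ENNReal.add_halves]
        _ = (P (g n) + Q) * c := by ring
        _ = c := by rw [hPQ, one_mul]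
    exact lt_irrefl c hcontra
  -- final contradiction via disjointness
  have hdisjSet : (↑(Finset.range N) : Set ℕ).PairwiseDisjoint A :=
    fun i _ j _ hij => hdisjp hij
  have hsum1 : ∑ n ∈ Finset.range N, ν (A n) ≤ 1 := by
    rw [← measure_biUnion_finset hdisjSet fun n _ => hAmeas n]
    exact prob_le_one
  have hsum2 : (N : ENNReal) * (c / 2) ≤ ∑ n ∈ Finset.range N, ν (A n) := by
    calc (N : ENNReal) * (c / 2) = ∑ _n ∈ Finset.range N, (c / 2) := by
          rw [Finset.sum_const, Finset.card_range, nsmul_eq_mul]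
      _ ≤ ∑ n ∈ Finset.range N, ν (A n) :=
          Finset.sum_le_sum fun n hn => (hclaim n (Finset.mem_range.mp hn)).le
  exact absurd ((hN1.trans_le hsum2).trans_le hsum1) (lt_irrefl 1)
end

section
/- Let G be a convergence group acting on a compact metrizable space M. Fix a basepoint x in the space of distinct triples T and endow G ∪ M with the topology generated by the discrete open sets of G together with the sets Ũ_G := {g ∈ G : g·x has at least two components in U} ∪ U for U ⊆ M open. Then G acts on G ∪ M by homeomorphisms, where G acts on itself by left multiplication and on M by the given action; explicitly, h·Ũ_G = (hU)~_G for all h ∈ G and open U ⊆ M. -/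
open Filter Set

section Triples

variable {M : Type*} [TopologicalSpace M]

/-- The space of distinct triples of `M`. -/
def Tri (M : Type*) : Type _ :=
  {x : M × M × M // x.1 ≠ x.2.1 ∧ x.2.1 ≠ x.2.2 ∧ x.1 ≠ x.2.2}

/-- The components of a triple. -/
def comp (x : Tri M) : Fin 3 → M := ![x.val.1, x.val.2.1, x.val.2.2]

/-- At least two of the three components of `x` lie in `U`. -/
def TwoIn (U : Set M) (x : Tri M) : Prop :=
  ∃ i j : Fin 3, i ≠ j ∧ comp x i ∈ U ∧ comp x j ∈ U

variable {G : Type*} [Group G] [MulAction G M]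

/-- The diagonal action of `G` on the space of distinct triples. -/
def tact (g : G) (x : Tri M) : Tri M :=
  ⟨(g • x.val.1, g • x.val.2.1, g • x.val.2.2), by
    obtain ⟨h1, h2, h3⟩ := x.prop
    refine ⟨?_, ?_, ?_⟩ <;> simp [h1, h2, h3]⟩

/-- The basic neighbourhood `Ũ_G ⊆ G ∪ M` attached to an open set `U ⊆ M` and a basepoint
`x ∈ T`: the elements `g ∈ G` such that `g·x` has at least two components in `U`,
together with `U` itself. -/
def UG (x : Tri M) (U : Set M) : Set (G ⊕ M) :=
  (Sum.inl '' {g : G | TwoIn U (tact g x)}) ∪ (Sum.inr '' U)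

/-- The action of `h ∈ G` on the compactification `G ∪ M`: left multiplication on `G`
and the given action on `M`. -/
def pastedAct (h : G) : G ⊕ M → G ⊕ M :=
  Sum.map (fun g => h * g) (fun m => h • m)

/-- Tukia's topology on `G ∪ M`: generated by the singletons of `G` together with the
sets `Ũ_G` for `U ⊆ M` open. -/
def pastedTop (x : Tri M) : TopologicalSpace (G ⊕ M) :=
  TopologicalSpace.generateFrom
    ({s | ∃ g : G, s = {Sum.inl g}} ∪ {s | ∃ U : Set M, IsOpen U ∧ s = UG x U})

end Triples


section Aux
variable {M : Type*} [TopologicalSpace M] {G : Type*} [Group G] [MulAction G M]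

lemma comp_tact (g : G) (x : Tri M) : comp (tact g x) = fun i => g • comp x i := by
  funext i; fin_cases i <;> rfl

lemma twoIn_smul (h g : G) (U : Set M) (x : Tri M) :
    TwoIn ((fun m : M => h • m) '' U) (tact (h * g) x) ↔ TwoIn U (tact g x) := by
  unfold TwoIn
  have hc : ∀ i, comp (tact (h * g) x) i = h • comp (tact g x) i := by
    intro i; simp [comp_tact, mul_smul]
  have hm : ∀ m : M, h • m ∈ (fun m : M => h • m) '' U ↔ m ∈ U :=
    fun m => (MulAction.injective h).mem_set_image
  constructor
  · rintro ⟨i, j, hij, hi, hj⟩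
    exact ⟨i, j, hij, (hm _).1 (by rwa [← hc i]), (hm _).1 (by rwa [← hc j])⟩
  · rintro ⟨i, j, hij, hi, hj⟩
    exact ⟨i, j, hij, by rw [hc i]; exact (hm _).2 hi, by rw [hc j]; exact (hm _).2 hj⟩

lemma image_UG (h : G) (x : Tri M) (U : Set M) :
    pastedAct h '' (UG x U) = UG x ((fun m : M => h • m) '' U) := by
  ext a
  constructor
  · rintro ⟨b, hb, rfl⟩
    rcases hb with ⟨g, hg, rfl⟩ | ⟨m, hm, rfl⟩
    · exact Or.inl ⟨h * g, (twoIn_smul h g U x).2 hg, rfl⟩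
    · exact Or.inr ⟨h • m, ⟨m, hm, rfl⟩, rfl⟩
  · rintro (⟨g, hg, rfl⟩ | ⟨m, ⟨n, hn, rfl⟩, rfl⟩)
    · refine ⟨Sum.inl (h⁻¹ * g), Or.inl ⟨h⁻¹ * g, ?_, rfl⟩, by simp [pastedAct]⟩
      have := (twoIn_smul h (h⁻¹ * g) U x)
      rw [mul_inv_cancel_left] at this
      exact this.1 hg
    · exact ⟨Sum.inr n, Or.inr ⟨n, hn, rfl⟩, rfl⟩

end Aux

/-- A group with the convergence property acts by homeomorphisms on the compactification
`G ∪ M`; explicitly `h · Ũ_G = (hU)~_G`, and each translation is continuous (hence a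
homeomorphism, its inverse being the translation by `h⁻¹`). -/
theorem pasted_action_by_homeomorphisms
    {G M : Type*} [Group G] [Countable G] [TopologicalSpace M]
    [CompactSpace M] [TopologicalSpace.MetrizableSpace M] [MulAction G M]
    (hcont : ∀ g : G, Continuous fun m : M => g • m)
    (x : Tri M) (h : G) :
    (∀ U : Set M, IsOpen U →
      pastedAct h '' (UG x U) = UG x ((fun m : M => h • m) '' U)) ∧
    @Continuous _ _ (pastedTop x) (pastedTop x) (pastedAct h) := by
  refine ⟨fun U _ => image_UG h x U, ?_⟩
  have hinv : ∀ S : Set (G ⊕ M), pastedAct h ⁻¹' S = pastedAct h⁻¹ '' S := by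
    intro S
    ext a
    constructor
    · intro ha
      refine ⟨pastedAct h a, ha, ?_⟩
      cases a <;> simp [pastedAct]
    · rintro ⟨b, hb, rfl⟩
      have : pastedAct h (pastedAct h⁻¹ b) = b := by cases b <;> simp [pastedAct]
      simpa [this] using hb
  rw [pastedTop, continuous_generateFrom_iff]
  rintro s (⟨g, rfl⟩ | ⟨U, hU, rfl⟩)
  · have : pastedAct h ⁻¹' {Sum.inl g} = {(Sum.inl (h⁻¹ * g) : G ⊕ M)} := by
      rw [hinv]
      simp [pastedAct]
    rw [this]
    exact TopologicalSpace.GenerateOpen.basic _ (Or.inl ⟨h⁻¹ * g, rfl⟩)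
  · rw [hinv, image_UG]
    refine TopologicalSpace.GenerateOpen.basic _ (Or.inr ⟨_, ?_, rfl⟩)
    have : (fun m : M => h⁻¹ • m) '' U = (fun m : M => h • m) ⁻¹' U := by
      ext m
      constructor
      · rintro ⟨n, hn, rfl⟩; simpa using hn
      · intro hm; exact ⟨h • m, hm, by simp⟩
    rw [this]
    exact hU.preimage (hcont h)
end
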